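/- Let I₁, I₂ be finite subsets of D = [0,1] × [0,∞] and let p ∈ [0,1]. Define ψ((p₁,c₁),(p₂,c₂),p) = ((1−p)·p₁ + p·p₂, max(c₁,c₂)) and Ψ_F(I₁,I₂,p) = {ψ(d₁,d₂,p) : d₁ ∈ I₁, d₂ ∈ I₂}. Then PF(Ψ_F(PF(I₁), I₂, p)) = PF(Ψ_F(I₁, I₂, p)) = PF(Ψ_F(I₁, PF(I₂), p)). -/

import Mathlib

open scoped ENNReal

/-- `D = [0,1] × [0,∞]`: probability–cost pairs, costs in the extended nonnegative
reals.  We encode it as the pairs `(p, c) : ℝ≥0∞ × ℝ≥0∞` with `p ≤ 1`. -/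
def Dom : Set (ℝ≥0∞ × ℝ≥0∞) := {d | d.1 ≤ 1}

/-- `(p,c) ⊑ (p',c')` iff `p ≥ p'` and `c ≤ c'`. -/
def sqle (d d' : ℝ≥0∞ × ℝ≥0∞) : Prop := d'.1 ≤ d.1 ∧ d.2 ≤ d'.2

/-- `d ⊏ d'` iff `d ⊑ d'` and `d ≠ d'`. -/
def slt (d d' : ℝ≥0∞ × ℝ≥0∞) : Prop := sqle d d' ∧ d ≠ d'

/-- The Pareto front `PF(I) = {d ∈ I : ∀ d' ∈ I, ¬(d' ⊏ d)}`. -/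
def PF (I : Set (ℝ≥0∞ × ℝ≥0∞)) : Set (ℝ≥0∞ × ℝ≥0∞) :=
  {d ∈ I | ∀ d' ∈ I, ¬ slt d' d}

/-- `ψ((p₁,c₁),(p₂,c₂),p) = ((1−p)·p₁ + p·p₂, max(c₁,c₂))`. -/
noncomputable def psi (d₁ d₂ : ℝ≥0∞ × ℝ≥0∞) (p : ℝ≥0∞) : ℝ≥0∞ × ℝ≥0∞ :=
  ((1 - p) * d₁.1 + p * d₂.1, max d₁.2 d₂.2)

/-- `Ψ_F(I₁,I₂,p) = {ψ(d₁,d₂,p) : d₁ ∈ I₁, d₂ ∈ I₂}`. -/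
noncomputable def PsiF (I₁ I₂ : Set (ℝ≥0∞ × ℝ≥0∞)) (p : ℝ≥0∞) : Set (ℝ≥0∞ × ℝ≥0∞) :=
  {d | ∃ d₁ ∈ I₁, ∃ d₂ ∈ I₂, d = psi d₁ d₂ p}


lemma sqle_refl (d : ℝ≥0∞ × ℝ≥0∞) : sqle d d := ⟨le_refl _, le_refl _⟩

lemma sqle_trans {a b c : ℝ≥0∞ × ℝ≥0∞} (h1 : sqle a b) (h2 : sqle b c) : sqle a c :=
  ⟨h2.1.trans h1.1, h1.2.trans h2.2⟩

lemma sqle_antisymm {a b : ℝ≥0∞ × ℝ≥0∞} (h1 : sqle a b) (h2 : sqle b a) : a = b :=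
  Prod.ext (le_antisymm h2.1 h1.1) (le_antisymm h1.2 h2.2)

/-- The order embedding into `ℝ≥0∞ᵒᵈ × ℝ≥0∞`. -/
noncomputable def phi (d : ℝ≥0∞ × ℝ≥0∞) : ℝ≥0∞ᵒᵈ × ℝ≥0∞ := (OrderDual.toDual d.1, d.2)

lemma phi_le {a b : ℝ≥0∞ × ℝ≥0∞} : phi a ≤ phi b ↔ sqle a b := by
  simp [phi, Prod.le_def, sqle, OrderDual.toDual_le_toDual]

lemma phi_inj : Function.Injective phi := by
  intro a b h
  simp only [phi, Prod.mk.injEq] at h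
  exact Prod.ext h.1 h.2

/-- In a finite set, every element is dominated by a Pareto-front element. -/
lemma exists_pf {I : Set (ℝ≥0∞ × ℝ≥0∞)} (hI : I.Finite) {x : ℝ≥0∞ × ℝ≥0∞} (hx : x ∈ I) :
    ∃ y ∈ PF I, sqle y x := by
  set s : Set (ℝ≥0∞ × ℝ≥0∞) := {y ∈ I | sqle y x} with hs
  have hsfin : s.Finite := hI.subset (fun y hy => hy.1)
  have hsne : s.Nonempty := ⟨x, hx, sqle_refl x⟩
  obtain ⟨m, hm, hmin⟩ : ∃ m ∈ s, ∀ a' ∈ s, phi a' ≤ phi m → phi m = phi a' := by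
    obtain ⟨m, hm, hmin⟩ := Set.Finite.exists_minimalFor phi s hsfin hsne
    exact ⟨m, hm, fun a' ha' h => le_antisymm (hmin ha' h) h⟩
  refine ⟨m, ⟨hm.1, ?_⟩, hm.2⟩
  intro d' hd' hlt
  have hd's : d' ∈ s := ⟨hd', sqle_trans hlt.1 hm.2⟩
  have := hmin d' hd's (phi_le.2 hlt.1)
  exact hlt.2 (phi_inj this.symm)

/-- If `J ⊆ I` and every element of `I` is dominated by one of `J`, then `PF I = PF J`. -/
lemma pf_eq {I J : Set (ℝ≥0∞ × ℝ≥0∞)} (hJI : J ⊆ I)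
    (hdom : ∀ x ∈ I, ∃ y ∈ J, sqle y x) : PF I = PF J := by
  ext d
  constructor
  · rintro ⟨hdI, hmin⟩
    obtain ⟨y, hyJ, hyd⟩ := hdom d hdI
    have hyd' : y = d := by
      by_contra hne
      exact hmin y (hJI hyJ) ⟨hyd, hne⟩
    subst hyd'
    exact ⟨hyJ, fun d' hd' => hmin d' (hJI hd')⟩
  · rintro ⟨hdJ, hmin⟩
    refine ⟨hJI hdJ, ?_⟩
    intro d' hd' hlt
    obtain ⟨y, hyJ, hyd'⟩ := hdom d' hd'
    have hyd : sqle y d := sqle_trans hyd' hlt.1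
    by_cases hy : y = d
    · subst hy
      exact hlt.2 (sqle_antisymm hlt.1 hyd')
    · exact hmin y hyJ ⟨hyd, hy⟩

lemma psi_mono_left {a b d₂ : ℝ≥0∞ × ℝ≥0∞} {p : ℝ≥0∞} (h : sqle a b) :
    sqle (psi a d₂ p) (psi b d₂ p) := by
  refine ⟨?_, ?_⟩
  · exact add_le_add (mul_le_mul_right h.1 _) le_rfl
  · exact max_le_max h.2 le_rfl

lemma psi_mono_right {a b d₁ : ℝ≥0∞ × ℝ≥0∞} {p : ℝ≥0∞} (h : sqle a b) :
    sqle (psi d₁ a p) (psi d₁ b p) := by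
  refine ⟨?_, ?_⟩
  · exact add_le_add le_rfl (mul_le_mul_right h.1 _)
  · exact max_le_max le_rfl h.2

/-- `PF(Ψ_F(PF(I₁), I₂, p)) = PF(Ψ_F(I₁, I₂, p)) = PF(Ψ_F(I₁, PF(I₂), p))`. -/
theorem pf_psiF_pf (I₁ I₂ : Set (ℝ≥0∞ × ℝ≥0∞)) (hI₁ : I₁.Finite) (hI₂ : I₂.Finite)
    (hI₁D : I₁ ⊆ Dom) (hI₂D : I₂ ⊆ Dom) (p : ℝ≥0∞) (hp : p ≤ 1) :
    PF (PsiF (PF I₁) I₂ p) = PF (PsiF I₁ I₂ p) ∧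
      PF (PsiF I₁ I₂ p) = PF (PsiF I₁ (PF I₂) p) := by
  constructor
  · refine (pf_eq ?_ ?_).symm
    · rintro x ⟨d₁, hd₁, d₂, hd₂, rfl⟩
      exact ⟨d₁, hd₁.1, d₂, hd₂, rfl⟩
    · rintro x ⟨d₁, hd₁, d₂, hd₂, rfl⟩
      obtain ⟨y, hy, hyd⟩ := exists_pf hI₁ hd₁
      exact ⟨psi y d₂ p, ⟨y, hy, d₂, hd₂, rfl⟩, psi_mono_left hyd⟩
  · refine pf_eq ?_ ?_
    · rintro x ⟨d₁, hd₁, d₂, hd₂, rfl⟩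
      exact ⟨d₁, hd₁, d₂, hd₂.1, rfl⟩
    · rintro x ⟨d₁, hd₁, d₂, hd₂, rfl⟩
      obtain ⟨y, hy, hyd⟩ := exists_pf hI₂ hd₂
      exact ⟨psi d₁ y p, ⟨d₁, hd₁, y, hy, rfl⟩, psi_mono_right hyd⟩
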